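/- Let K be a field, E a K-vector space of finite dimension N+1, w a weight function on E, and l_0, …, l_N a basis of E adapted to w. For a nonzero linear functional h ∈ E^∨, the dual weight w*(h) = −min{ w(x) : x ∈ E, h(x) = 1 } is given by the formula w*(h) = −min{ w(l_j) : 0 ≤ j ≤ N, h(l_j) ≠ 0 }. -/

import Mathlib

/-- A weight function on a `K`-vector space `E` is a map `w : E → ℝ ∪ {−∞}` such that
(1) `w x = −∞` iff `x = 0`; (2) `w (t • x) = w x` for all nonzero `t : K`;
(3) `w (x + y) ≤ max (w x) (w y)`. -/
def IsWeightFunction (K : Type*) [Field K] {E : Type*} [AddCommGroup E] [Module K E]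
    (w : E → WithBot ℝ) : Prop :=
  (∀ x : E, w x = ⊥ ↔ x = 0) ∧
  (∀ (t : K) (x : E), t ≠ 0 → w (t • x) = w x) ∧
  (∀ x y : E, w (x + y) ≤ max (w x) (w y))

/-- A basis `b` of `E` is adapted to the weight function `w` if for every `α ∈ ℝ`, the
sublevel subspace `F^α = {x ∈ E : w x ≤ α}` equals the span of `{b j : w (b j) ≤ α}`. -/
def IsAdaptedBasis (K : Type*) [Field K] {E : Type*} [AddCommGroup E] [Module K E]
    {ι : Type*} (w : E → WithBot ℝ) (b : Module.Basis ι K E) : Prop :=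
  ∀ α : ℝ, {x : E | w x ≤ (α : WithBot ℝ)} =
    ↑(Submodule.span K (b '' {j : ι | w (b j) ≤ (α : WithBot ℝ)}))

/-- For a basis `b` adapted to the weight function `w` and a nonzero functional `h`,
the minimum `min{w x : h x = 1}` (whose negative is the dual weight `w* h`) equals
`min{w (b j) : h (b j) ≠ 0}`. -/
theorem dual_weight_via_adapted_basis (K : Type*) [Field K] (E : Type*) [AddCommGroup E]
    [Module K E] (N : ℕ) (w : E → WithBot ℝ) (hw : IsWeightFunction K w)
    (b : Module.Basis (Fin (N + 1)) K E) (hb : IsAdaptedBasis K w b)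
    (h : Module.Dual K E) (hh : h ≠ 0) (x : E) (hx : h x = 1)
    (hmin : ∀ y : E, h y = 1 → w x ≤ w y) :
    ∃ j : Fin (N + 1), h (b j) ≠ 0 ∧ w x = w (b j) ∧
      ∀ i : Fin (N + 1), h (b i) ≠ 0 → w (b j) ≤ w (b i) := by
  -- S : indices with h (b i) ≠ 0
  have hSne : ∃ i, h (b i) ≠ 0 := by
    by_contra hc
    push_neg at hc
    apply hh
    apply b.ext
    intro i
    simp [hc i]
  obtain ⟨i0, hi0⟩ := hSne
  classical
  have hS : (Finset.univ.filter (fun i => h (b i) ≠ 0)).Nonempty :=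
    ⟨i0, by simp [hi0]⟩
  obtain ⟨j, hjS, hjmin⟩ := Finset.exists_min_image _ (fun i => w (b i)) hS
  have hj : h (b j) ≠ 0 := by simpa using (Finset.mem_filter.mp hjS).2
  refine ⟨j, hj, ?_, fun i hi => hjmin i (Finset.mem_filter.mpr ⟨Finset.mem_univ i, hi⟩)⟩
  -- w x ≤ w (b j)
  have h1 : w x ≤ w (b j) := by
    have hy : h ((h (b j))⁻¹ • b j) = 1 := by
      simp [map_smul, inv_mul_cancel₀ hj]
    have := hmin _ hy
    rwa [hw.2.1 _ _ (inv_ne_zero hj)] at this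
  -- w (b j) ≤ w x
  have hx0 : x ≠ 0 := by
    intro hx0; rw [hx0] at hx; simp at hx
  have hwx : w x ≠ ⊥ := fun hbot => hx0 ((hw.1 x).mp hbot)
  obtain ⟨α, hα⟩ : ∃ α : ℝ, w x = (α : WithBot ℝ) := by
    cases hwx' : w x with
    | bot => exact absurd hwx' hwx
    | coe α => exact ⟨α, rfl⟩
  have hxmem : x ∈ {z : E | w z ≤ (α : WithBot ℝ)} := le_of_eq hα
  rw [hb α] at hxmem
  -- some generator with h ≠ 0 and w ≤ α
  have : ∃ i : Fin (N + 1), w (b i) ≤ (α : WithBot ℝ) ∧ h (b i) ≠ 0 := by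
    by_contra hc
    push_neg at hc
    have hle : Submodule.span K (b '' {j : Fin (N+1) | w (b j) ≤ (α : WithBot ℝ)})
        ≤ LinearMap.ker h := by
      rw [Submodule.span_le]
      rintro _ ⟨i, hiw, rfl⟩
      exact LinearMap.mem_ker.mpr (hc i hiw)
    have := hle hxmem
    rw [LinearMap.mem_ker] at this
    rw [this] at hx
    exact one_ne_zero hx.symm
  obtain ⟨i, hiw, hine⟩ := this
  have h2 : w (b j) ≤ w x := by
    calc w (b j) ≤ w (b i) := hjmin i (Finset.mem_filter.mpr ⟨Finset.mem_univ i, hine⟩)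
    _ ≤ (α : WithBot ℝ) := hiw
    _ = w x := hα.symm
  exact le_antisymm h1 h2
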